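/- Let f : [z₁, z₂] → ℂ be C¹ with f′′ integrable and f(z) ≠ 0 for all z, let A : [z₁, z₂] → ℂ be continuous, and let w : [z₁, z₂] → ℂ be a C² solution of w′′ + A·w = 0 with w(z₁) = 0 = w(z₂). Set F = w/f. Then ∫_{z₁}^{z₂} f² |F′|² dz = ∫_{z₁}^{z₂} (f f′′ + A f²) |F|² dz. -/

import Mathlib

open intervalIntegral

theorem stmt_5 (z₁ z₂ : ℝ) (hz : z₁ < z₂) (f f' f'' w w' w'' A : ℝ → ℂ)
    (hf : ∀ z ∈ Set.Icc z₁ z₂, HasDerivAt f (f' z) z)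
    (hf' : ∀ z ∈ Set.Icc z₁ z₂, HasDerivAt f' (f'' z) z)
    (hf''int : IntervalIntegrable f'' MeasureTheory.volume z₁ z₂)
    (hfne : ∀ z ∈ Set.Icc z₁ z₂, f z ≠ 0)
    (hA : ContinuousOn A (Set.Icc z₁ z₂))
    (hw : ∀ z ∈ Set.Icc z₁ z₂, HasDerivAt w (w' z) z)
    (hw' : ∀ z ∈ Set.Icc z₁ z₂, HasDerivAt w' (w'' z) z)
    (hw''cont : ContinuousOn w'' (Set.Icc z₁ z₂))
    (heq : ∀ z ∈ Set.Icc z₁ z₂, w'' z + A z * w z = 0)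
    (hbc1 : w z₁ = 0) (hbc2 : w z₂ = 0) :
    (∫ z in z₁..z₂, f z ^ 2 * ((‖deriv (fun t => w t / f t) z‖ : ℂ)) ^ 2) =
      ∫ z in z₁..z₂, (f z * f'' z + A z * f z ^ 2) * ((‖w z / f z‖ : ℂ)) ^ 2 := by
  have hle := hz.le
  have huIcc : Set.uIcc z₁ z₂ = Set.Icc z₁ z₂ := Set.uIcc_of_le hle
  set F : ℝ → ℂ := fun t => w t / f t with hF_def
  set G : ℝ → ℂ := fun t => (w' t * f t - w t * f' t) / f t ^ 2 with hG_def
  set H : ℝ → ℂ := fun t => w' t * f t - w t * f' t with hH_def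
  set H2 : ℝ → ℂ := fun t => w'' t * f t - w t * f'' t with hH2_def
  have hsq : ∀ c : ℂ, ((‖c‖ : ℂ)) ^ 2 = c * star c := by
    intro c
    rw [Complex.star_def, Complex.mul_conj]
    norm_cast
    simp [Complex.normSq_eq_norm_sq]
  -- continuity
  have hfc : ContinuousOn f (Set.Icc z₁ z₂) :=
    fun z hz' => (hf z hz').continuousAt.continuousWithinAt
  have hf'c : ContinuousOn f' (Set.Icc z₁ z₂) :=
    fun z hz' => (hf' z hz').continuousAt.continuousWithinAt
  have hwc : ContinuousOn w (Set.Icc z₁ z₂) :=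
    fun z hz' => (hw z hz').continuousAt.continuousWithinAt
  have hw'c : ContinuousOn w' (Set.Icc z₁ z₂) :=
    fun z hz' => (hw' z hz').continuousAt.continuousWithinAt
  have hGc : ContinuousOn G (Set.Icc z₁ z₂) :=
    ((hw'c.mul hfc).sub (hwc.mul hf'c)).div (hfc.pow 2)
      (fun z hz' => pow_ne_zero 2 (hfne z hz'))
  have hFderiv : ∀ z ∈ Set.Icc z₁ z₂, HasDerivAt F (G z) z :=
    fun z hz' => (hw z hz').div (hf z hz') (hfne z hz')
  have hHderiv : ∀ z ∈ Set.Icc z₁ z₂, HasDerivAt H (H2 z) z := by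
    intro z hz'
    have h1 := ((hw' z hz').mul (hf z hz')).sub ((hw z hz').mul (hf' z hz'))
    refine HasDerivAt.congr_deriv h1 ?_
    simp only [hH2_def]
    ring
  have hH2int : IntervalIntegrable H2 MeasureTheory.volume z₁ z₂ := by
    apply IntervalIntegrable.sub
    · exact (by rw [huIcc]; exact hw''cont.mul hfc :
        ContinuousOn (fun t => w'' t * f t) (Set.uIcc z₁ z₂)).intervalIntegrable
    · exact hf''int.continuousOn_mul (by rw [huIcc]; exact hwc)
  have hconjGint : IntervalIntegrable (fun t => star (G t)) MeasureTheory.volume z₁ z₂ := by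
    apply ContinuousOn.intervalIntegrable
    rw [huIcc]
    exact continuous_star.comp_continuousOn hGc
  have hibp := intervalIntegral.integral_mul_deriv_eq_deriv_mul
      (u := H) (u' := H2) (v := fun t => star (F t)) (v' := fun t => star (G t))
      (fun x hx => hHderiv x (huIcc ▸ hx))
      (fun x hx => (hFderiv x (huIcc ▸ hx)).star)
      hH2int hconjGint
  have hFz1 : F z₁ = 0 := by simp [hF_def, hbc1]
  have hFz2 : F z₂ = 0 := by simp [hF_def, hbc2]
  simp only [hFz1, hFz2, star_zero, mul_zero, zero_sub, neg_zero] at hibp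
  calc (∫ z in z₁..z₂, f z ^ 2 * ((‖deriv F z‖ : ℂ)) ^ 2)
      = ∫ z in z₁..z₂, H z * star (G z) := by
        apply intervalIntegral.integral_congr
        intro z hz'
        rw [huIcc] at hz'
        dsimp only
        rw [(hFderiv z hz').deriv, hsq]
        have hne : f z ≠ 0 := hfne z hz'
        have hne' : (starRingEnd ℂ) (f z) ≠ 0 := by
          simpa using hne
        simp only [hG_def, hH_def, Complex.star_def, map_div₀, map_sub, map_mul, map_pow]
        field_simp
    _ = -∫ z in z₁..z₂, H2 z * star (F z) := hibp
    _ = ∫ z in z₁..z₂, -(H2 z * star (F z)) := (intervalIntegral.integral_neg).symm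
    _ = ∫ z in z₁..z₂, (f z * f'' z + A z * f z ^ 2) * ((‖F z‖ : ℂ)) ^ 2 := by
        apply intervalIntegral.integral_congr
        intro z hz'
        rw [huIcc] at hz'
        have hne : f z ≠ 0 := hfne z hz'
        have hw'' : w'' z = -(A z * w z) := by linear_combination heq z hz'
        dsimp only
        rw [hsq]
        have hne' : (starRingEnd ℂ) (f z) ≠ 0 := by
          simpa using hne
        simp only [hH2_def, hF_def, hw'', Complex.star_def, map_div₀]
        field_simp
        ring
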